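/- arXiv:2503.21071 — 2 statements merged into one kernel-verified Lean document; each statement's English description precedes it below -/
import Mathlib

section
/- Let q ≥ 1, d ≥ 1, and let Θ ⊆ ℝ^d be a convex set with ℓq-diameter at most R that contains a closed ℓq-ball of radius r > 0. Let μ and ν be probability measures supported on Θ, and suppose ν = ν₀ + ν₁ where ν₀ is an arbitrary (nonnegative) measure and ν₁ is absolutely continuous with respect to Lebesgue measure with density at least p_min > 0 everywhere on Θ. Let Δ > 0 and suppose TV(μ, ν) < p_min · vol(B_q^d(1)) · (r/(4R))^d · Δ^d, where vol(B_q^d(1)) is the Lebesgue volume of the unit ℓq-ball in ℝ^d. Then for every subset U of Θ that is open in the subspace topology of Θ, μ(U) ≤ ν(U^Δ), where U^Δ = {x ∈ Θ : inf_{u∈U} ‖x−u‖_q ≤ Δ} is the Δ-expansion of U in ℓq distance (equivalently, by the Givens–Shortt characterization, W_∞^{ℓq}(μ,ν) ≤ Δ). -/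
open MeasureTheory
open scoped ENNReal Pointwise

noncomputable section

/-- The ℓq norm on ℝ^d. -/
def lqNorm {d : ℕ} (q : ℝ) (x : Fin d → ℝ) : ℝ := (∑ i, |x i| ^ q) ^ (1 / q)

/-- The closed ℓq-ball of radius `r` centered at `c` in ℝ^d. -/
def lqBall (d : ℕ) (q : ℝ) (c : Fin d → ℝ) (r : ℝ) : Set (Fin d → ℝ) :=
  {x | lqNorm q (x - c) ≤ r}

/-- The total variation distance between two measures. -/
def tvDist {α : Type*} [MeasurableSpace α] (μ ν : Measure α) : ℝ :=
  ⨆ S : {S : Set α // MeasurableSet S}, |(μ S.1).toReal - (ν S.1).toReal|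

/-- The `α`-expansion of `U` inside `Θ` in ℓq distance:
`U^α = {x ∈ Θ : inf_{u ∈ U} ‖x - u‖_q ≤ α}`. -/
def expand {d : ℕ} (q : ℝ) (Θ U : Set (Fin d → ℝ)) (α : ℝ) : Set (Fin d → ℝ) :=
  {x ∈ Θ | sInf {t : ℝ | ∃ u ∈ U, t = lqNorm q (x - u)} ≤ α}

section AuxLemmas
variable {d : ℕ} {q : ℝ}

lemma lqNorm_eq_norm (hq : 1 ≤ q) (x : Fin d → ℝ) :
    lqNorm q x = ‖(WithLp.equiv (ENNReal.ofReal q) (Fin d → ℝ)).symm x‖ := by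
  have hq0 : (0:ℝ) < q := lt_of_lt_of_le one_pos hq
  have ht : (ENNReal.ofReal q).toReal = q := ENNReal.toReal_ofReal hq0.le
  rw [PiLp.norm_eq_sum (by rw [ht]; exact hq0)]
  simp [lqNorm, ht, Real.norm_eq_abs]

lemma lqNorm_nonneg (hq : 1 ≤ q) (x : Fin d → ℝ) : 0 ≤ lqNorm q x := by
  haveI : Fact ((1:ℝ≥0∞) ≤ ENNReal.ofReal q) := ⟨ENNReal.one_le_ofReal.2 hq⟩
  rw [lqNorm_eq_norm hq]; exact norm_nonneg _

lemma lqNorm_zero (hq : 1 ≤ q) : lqNorm q (0 : Fin d → ℝ) = 0 := by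
  have hq0 : (0:ℝ) < q := lt_of_lt_of_le one_pos hq
  simp [lqNorm, Real.zero_rpow hq0.ne', Real.zero_rpow (by positivity : 1/q ≠ 0), Real.zero_rpow (inv_ne_zero hq0.ne')]

lemma lqNorm_smul (hq : 1 ≤ q) (a : ℝ) (x : Fin d → ℝ) :
    lqNorm q (a • x) = |a| * lqNorm q x := by
  haveI : Fact ((1:ℝ≥0∞) ≤ ENNReal.ofReal q) := ⟨ENNReal.one_le_ofReal.2 hq⟩
  rw [lqNorm_eq_norm hq, lqNorm_eq_norm hq, WithLp.equiv_symm_apply, WithLp.toLp_smul, norm_smul, Real.norm_eq_abs]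

lemma lqNorm_add_le (hq : 1 ≤ q) (x y : Fin d → ℝ) :
    lqNorm q (x + y) ≤ lqNorm q x + lqNorm q y := by
  haveI : Fact ((1:ℝ≥0∞) ≤ ENNReal.ofReal q) := ⟨ENNReal.one_le_ofReal.2 hq⟩
  rw [lqNorm_eq_norm hq, lqNorm_eq_norm hq, lqNorm_eq_norm hq, WithLp.equiv_symm_apply, WithLp.toLp_add]
  exact norm_add_le _ _

lemma lqNorm_sub_rev (hq : 1 ≤ q) (x y : Fin d → ℝ) :
    lqNorm q (x - y) = lqNorm q (y - x) := by
  haveI : Fact ((1:ℝ≥0∞) ≤ ENNReal.ofReal q) := ⟨ENNReal.one_le_ofReal.2 hq⟩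
  rw [lqNorm_eq_norm hq, lqNorm_eq_norm hq, WithLp.equiv_symm_apply, WithLp.toLp_sub, WithLp.toLp_sub]
  exact norm_sub_rev _ _

lemma lqNorm_sub_le (hq : 1 ≤ q) (x y z : Fin d → ℝ) :
    lqNorm q (x - z) ≤ lqNorm q (x - y) + lqNorm q (y - z) := by
  have h : x - z = (x - y) + (y - z) := by abel
  rw [h]; exact lqNorm_add_le hq _ _

lemma lqNorm_pos (hq : 1 ≤ q) {v : Fin d → ℝ} (hv : v ≠ 0) : 0 < lqNorm q v := by
  haveI : Fact ((1:ℝ≥0∞) ≤ ENNReal.ofReal q) := ⟨ENNReal.one_le_ofReal.2 hq⟩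
  rw [lqNorm_eq_norm hq, norm_pos_iff]
  intro h
  exact hv (by simpa using congrArg (WithLp.equiv (ENNReal.ofReal q) (Fin d → ℝ)) h)

lemma measurable_lqNorm_sub (hq : 1 ≤ q) (c : Fin d → ℝ) :
    Measurable fun x : Fin d → ℝ => lqNorm q (x - c) := by
  have h : (fun x : Fin d → ℝ => lqNorm q (x - c))
      = fun x => (∑ i, |x i - c i| ^ q) ^ (1 / q) := rfl
  rw [h]; fun_prop

lemma measurableSet_lqBall (hq : 1 ≤ q) (c : Fin d → ℝ) (ρ : ℝ) :
    MeasurableSet (lqBall d q c ρ) :=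
  measurableSet_le (measurable_lqNorm_sub hq c) measurable_const

lemma lqBall_eq_smul (hq : 1 ≤ q) (c : Fin d → ℝ) {ρ : ℝ} (hρ : 0 < ρ) :
    lqBall d q c ρ = c +ᵥ (ρ • lqBall d q 0 1 : Set (Fin d → ℝ)) := by
  ext x
  simp only [lqBall, Set.mem_setOf_eq, Set.mem_vadd_set, Set.mem_smul_set]
  constructor
  · intro hx
    refine ⟨ρ • (ρ⁻¹ • (x - c)), ⟨ρ⁻¹ • (x - c), ?_, rfl⟩, ?_⟩
    · simp only [Set.mem_setOf_eq, sub_zero]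
      rw [lqNorm_smul hq, abs_of_pos (inv_pos.2 hρ)]
      rw [inv_mul_le_iff₀ hρ, mul_one]
      try exact hx
    · rw [smul_inv_smul₀ hρ.ne']
      show c + (x - c) = x
      abel
  · rintro ⟨w, ⟨y, hy, rfl⟩, rfl⟩
    show lqNorm q (c + ρ • y - c) ≤ ρ
    rw [add_sub_cancel_left, lqNorm_smul hq, abs_of_pos hρ]
    simp only [Set.mem_setOf_eq, sub_zero] at hy
    calc ρ * lqNorm q y ≤ ρ * 1 := by
          exact mul_le_mul_of_nonneg_left hy hρ.le
    _ = ρ := mul_one ρ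

lemma volume_lqBall (hq : 1 ≤ q) (c : Fin d → ℝ) {ρ : ℝ} (hρ : 0 < ρ) :
    volume (lqBall d q c ρ) = ENNReal.ofReal (ρ ^ d) * volume (lqBall d q 0 1) := by
  rw [lqBall_eq_smul hq c hρ, measure_vadd, Measure.addHaar_smul]
  congr 2
  rw [abs_of_nonneg (by positivity)]
  simp

lemma volume_lqBall_one_lt_top (hq : 1 ≤ q) : volume (lqBall d q 0 1) < ⊤ := by
  have hq0 : (0:ℝ) < q := lt_of_lt_of_le one_pos hq
  have hsub : lqBall d q 0 1 ⊆ Metric.closedBall (0 : Fin d → ℝ) 1 := by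
    intro x hx
    simp only [lqBall, Set.mem_setOf_eq, sub_zero, lqNorm] at hx
    rw [Metric.mem_closedBall, dist_zero_right]
    rw [pi_norm_le_iff_of_nonneg (by norm_num)]
    intro i
    have h1 : |x i| ^ q ≤ ∑ j, |x j| ^ q :=
      Finset.single_le_sum (fun j _ => Real.rpow_nonneg (abs_nonneg _) q) (Finset.mem_univ i)
    have h2 : (|x i| ^ q) ^ (1/q) ≤ (∑ j, |x j| ^ q) ^ (1/q) :=
      Real.rpow_le_rpow (Real.rpow_nonneg (abs_nonneg _) q) h1 (by positivity)
    have h3 : (|x i| ^ q) ^ (1/q) = |x i| := by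
      rw [one_div, Real.rpow_rpow_inv (abs_nonneg _) hq0.ne']
    rw [Real.norm_eq_abs, ← h3]
    exact le_trans h2 hx
  exact lt_of_le_of_lt (measure_mono hsub) measure_closedBall_lt_top

end AuxLemmas

/-- **Lemma 1 of the paper (converting TV to W∞), general convex domain.**
Let `Θ ⊆ ℝ^d` be convex with ℓq-diameter at most `R`, containing an ℓq-ball of radius
`r > 0`.  Let `μ, ν` be probability measures on `Θ` with `ν = ν₀ + ν₁`, `ν₁` having
Lebesgue density at least `p_min` on `Θ`.  If
`TV(μ,ν) < p_min · vol(B_q^d(1)) · (r/(4R))^d · Δ^d`, then `μ(U) ≤ ν(U^Δ)` for every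
relatively open `U ⊆ Θ` (i.e. `W_∞^{ℓq}(μ,ν) ≤ Δ`). -/
theorem tv_to_winfty_convex
    (d : ℕ) (hd : 1 ≤ d) (q : ℝ) (hq : 1 ≤ q)
    (R r : ℝ) (hr : 0 < r)
    (Θ : Set (Fin d → ℝ)) (hconv : Convex ℝ Θ)
    (hdiam : ∀ x ∈ Θ, ∀ y ∈ Θ, lqNorm q (x - y) ≤ R)
    (hball : ∃ c, lqBall d q c r ⊆ Θ)
    (μ ν ν₀ : Measure (Fin d → ℝ)) (f : (Fin d → ℝ) → ℝ) (pmin : ℝ) (hpmin : 0 < pmin)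
    (hμ : IsProbabilityMeasure μ) (hν : IsProbabilityMeasure ν)
    (hμsupp : μ Θᶜ = 0) (hνsupp : ν Θᶜ = 0)
    (hνdecomp : ν = ν₀ + volume.withDensity fun x => ENNReal.ofReal (f x))
    (hf : ∀ x ∈ Θ, pmin ≤ f x)
    (Δ : ℝ) (hΔ : 0 < Δ)
    (hTV : tvDist μ ν <
      pmin * (volume (lqBall d q 0 1)).toReal * (r / (4 * R)) ^ d * Δ ^ d) :
    ∀ U : Set (Fin d → ℝ), (∃ V, IsOpen V ∧ U = V ∩ Θ) →
      μ U ≤ ν (expand q Θ U Δ) := by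
  intro U hU
  obtain ⟨V, hVopen, rfl⟩ := hU
  set U : Set (Fin d → ℝ) := V ∩ Θ with hUdef
  set E : Set (Fin d → ℝ) := expand q Θ U Δ with hEdef
  -- the distance-to-U function
  set D : (Fin d → ℝ) → ℝ := fun y => sInf {t : ℝ | ∃ u ∈ U, t = lqNorm q (y - u)} with hDdef
  have hmemE : ∀ y, y ∈ E ↔ y ∈ Θ ∧ D y ≤ Δ := fun y => Iff.rfl
  have hνΘ : (1 : ℝ≥0∞) ≤ ν Θ := by
    have h1 : ν Set.univ ≤ ν Θ + ν Θᶜ := by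
      rw [← Set.union_compl_self Θ]; exact measure_union_le _ _
    rw [measure_univ, hνsupp, add_zero] at h1
    exact h1
  by_cases hcov : ∀ x ∈ Θ, x ∈ E
  · calc μ U ≤ 1 := prob_le_one
    _ ≤ ν Θ := hνΘ
    _ ≤ ν E := measure_mono hcov
  push_neg at hcov
  obtain ⟨x, hxΘ, hxE⟩ := hcov
  -- U is nonempty
  rcases Set.eq_empty_or_nonempty U with hUe | hUne
  · exact absurd ((hmemE x).2 ⟨hxΘ, by simp [hDdef, hUe, Real.sInf_empty, hΔ.le]⟩) hxE
  obtain ⟨u₀, hu₀⟩ := hUne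
  have hu₀Θ : u₀ ∈ Θ := hu₀.2
  -- basic facts about D
  have hSbdd : ∀ y : Fin d → ℝ, BddBelow {t : ℝ | ∃ u ∈ U, t = lqNorm q (y - u)} :=
    fun y => ⟨0, by rintro t ⟨u, hu, rfl⟩; exact lqNorm_nonneg hq _⟩
  have hSne : ∀ y : Fin d → ℝ, {t : ℝ | ∃ u ∈ U, t = lqNorm q (y - u)}.Nonempty :=
    fun y => ⟨_, u₀, hu₀, rfl⟩
  have hDle : ∀ y : Fin d → ℝ, ∀ u ∈ U, D y ≤ lqNorm q (y - u) :=
    fun y u hu => csInf_le (hSbdd y) ⟨u, hu, rfl⟩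
  have hleD : ∀ (y : Fin d → ℝ) (a : ℝ), (∀ u ∈ U, a ≤ lqNorm q (y - u)) → a ≤ D y :=
    fun y a h => le_csInf (hSne y) (by rintro t ⟨u, hu, rfl⟩; exact h u hu)
  have hDlip : ∀ y z : Fin d → ℝ, D y ≤ D z + lqNorm q (y - z) := by
    intro y z
    have h1 : D y - lqNorm q (y - z) ≤ D z := by
      apply hleD
      intro u hu
      have := lqNorm_sub_le hq y z u
      have h2 := hDle y u hu
      linarith
    linarith
  have hDx : Δ < D x := by
    by_contra h
    exact hxE ((hmemE x).2 ⟨hxΘ, le_of_not_gt h⟩)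
  have hΔR : Δ < R :=
    lt_of_lt_of_le hDx (le_trans (hDle x u₀ hu₀) (hdiam x hxΘ u₀ hu₀Θ))
  have hR : 0 < R := lt_trans hΔ hΔR
  obtain ⟨c, hc⟩ := hball
  have hcΘ : c ∈ Θ := hc (by simp [lqBall, sub_self, lqNorm_zero hq, hr.le])
  -- r ≤ R via a unit vector
  have hq0 : (0:ℝ) < q := lt_of_lt_of_le one_pos hq
  have hrR : r ≤ R := by
    have i0 : Fin d := ⟨0, hd⟩
    have he : lqNorm q (Pi.single i0 (1:ℝ) : Fin d → ℝ) = 1 := by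
      unfold lqNorm
      have hcongr : ∀ j, |(Pi.single i0 (1:ℝ) : Fin d → ℝ) j| ^ q
          = if j = i0 then 1 else 0 := by
        intro j
        rcases eq_or_ne j i0 with h | h
        · subst h; simp [Pi.single_eq_same, Real.one_rpow]
        · rw [Pi.single_eq_of_ne h, if_neg h]
          simp [Real.zero_rpow hq0.ne']
      rw [Finset.sum_congr rfl (fun j _ => hcongr j)]
      simp [Real.one_rpow]
    have hw' : c + r • (Pi.single i0 (1:ℝ) : Fin d → ℝ) ∈ Θ := by
      apply hc
      show lqNorm q (c + r • (Pi.single i0 (1:ℝ) : Fin d → ℝ) - c) ≤ r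
      rw [add_sub_cancel_left, lqNorm_smul hq, he, abs_of_pos hr, mul_one]
    have h1 := hdiam _ hw' c hcΘ
    rw [add_sub_cancel_left, lqNorm_smul hq, he, abs_of_pos hr, mul_one] at h1
    exact h1
  -- IVT to find a point z with D z = 3Δ/4
  set g : ℝ → (Fin d → ℝ) := fun t => u₀ + t • (x - u₀) with hgdef
  set φ : ℝ → ℝ := fun t => D (g t) with hφdef
  have hgl : ∀ t t' : ℝ, lqNorm q (g t - g t') = |t - t'| * lqNorm q (x - u₀) := by
    intro t t'
    have h : g t - g t' = (t - t') • (x - u₀) := by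
      simp only [hgdef]; rw [add_sub_add_left_eq_sub, ← sub_smul]
    rw [h, lqNorm_smul hq]
  have hφcont : Continuous φ := by
    apply LipschitzWith.continuous (K := Real.toNNReal (lqNorm q (x - u₀)))
    apply LipschitzWith.of_dist_le_mul
    intro t t'
    rw [Real.dist_eq, Real.dist_eq, Real.coe_toNNReal _ (lqNorm_nonneg hq _)]
    have h1 : φ t ≤ φ t' + |t - t'| * lqNorm q (x - u₀) := by
      have := hDlip (g t) (g t'); rw [hgl t t'] at this; exact this
    have h2 : φ t' ≤ φ t + |t' - t| * lqNorm q (x - u₀) := by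
      have := hDlip (g t') (g t); rw [hgl t' t] at this; exact this
    rw [abs_sub_comm t' t] at h2
    rw [abs_le]
    constructor <;> linarith
  have hφ0 : φ 0 ≤ 0 := by
    have : g 0 = u₀ := by simp [hgdef]
    rw [hφdef]
    simp only [this]
    calc D u₀ ≤ lqNorm q (u₀ - u₀) := hDle u₀ u₀ hu₀
    _ = 0 := by rw [sub_self, lqNorm_zero hq]
  have hφ1 : Δ ≤ φ 1 := by
    have : g 1 = x := by simp [hgdef]
    rw [hφdef]; simp only [this]; exact hDx.le
  have hmem : (3*Δ/4) ∈ Set.Icc (φ 0) (φ 1) := ⟨by linarith, by linarith⟩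
  obtain ⟨t, ht01, hφt⟩ := intermediate_value_Icc zero_le_one hφcont.continuousOn hmem
  obtain ⟨z, hzdef⟩ : ∃ z' : Fin d → ℝ, z' = g t := ⟨g t, rfl⟩
  have hzΘ : z ∈ Θ := by
    have hgz : z = (1 - t) • u₀ + t • x := by
      rw [hzdef, hgdef]; module
    rw [hgz]
    exact hconv hu₀Θ hxΘ (by linarith [ht01.2]) ht01.1 (by ring)
  have hDz : D z = 3*Δ/4 := by rw [hzdef]; exact hφt
  -- distance from c to z
  have hLz : lqNorm q (c - z) ≤ R - r := by
    rcases eq_or_ne c z with h | h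
    · rw [h, sub_self, lqNorm_zero hq]; linarith
    · set L : ℝ := lqNorm q (c - z) with hLdef
      have hL0 : 0 < L := lqNorm_pos hq (sub_ne_zero.2 h)
      have hw' : c + (r / L) • (c - z) ∈ Θ := by
        apply hc
        show lqNorm q (c + (r / L) • (c - z) - c) ≤ r
        rw [add_sub_cancel_left, lqNorm_smul hq, abs_of_pos (by positivity), ← hLdef]
        rw [div_mul_cancel₀ _ hL0.ne']
      have h1 := hdiam _ hw' z hzΘ
      have h2 : c + (r / L) • (c - z) - z = (1 + r / L) • (c - z) := by module
      rw [h2, lqNorm_smul hq, abs_of_pos (by positivity), ← hLdef] at h1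
      have h3 : (1 + r / L) * L = L + r := by field_simp
      rw [h3] at h1
      linarith
  -- construct the ball
  set s : ℝ := Δ / (4 * R) with hsdef
  have hs0 : 0 < s := by positivity
  have hs1 : s ≤ 1 := by
    rw [hsdef, div_le_one (by positivity)]
    nlinarith
  obtain ⟨m, hmdef⟩ : ∃ m' : Fin d → ℝ, m' = z + s • (c - z) := ⟨_, rfl⟩
  set ρ : ℝ := s * r with hρdef
  have hρ0 : 0 < ρ := by positivity
  set B : Set (Fin d → ℝ) := lqBall d q m ρ with hBdef
  have hmΘ : m ∈ Θ := by
    have : m = (1 - s) • z + s • c := by rw [hmdef]; module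
    rw [this]
    exact hconv hzΘ hcΘ (by linarith) hs0.le (by ring)
  have hBΘ : B ⊆ Θ := by
    intro w hw
    have hw' : lqNorm q (w - m) ≤ ρ := hw
    have hyΘ : c + s⁻¹ • (w - m) ∈ Θ := by
      apply hc
      show lqNorm q (c + s⁻¹ • (w - m) - c) ≤ r
      rw [add_sub_cancel_left, lqNorm_smul hq, abs_of_pos (inv_pos.2 hs0)]
      calc s⁻¹ * lqNorm q (w - m) ≤ s⁻¹ * (s * r) :=
        mul_le_mul_of_nonneg_left hw' (inv_pos.2 hs0).le
      _ = r := by field_simp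
    have hcomb : w = (1 - s) • z + s • (c + s⁻¹ • (w - m)) := by
      rw [smul_add s c (s⁻¹ • (w - m)), smul_inv_smul₀ hs0.ne' (w - m), hmdef]
      module
    rw [hcomb]
    exact hconv hzΘ hyΘ (by linarith) hs0.le (by ring)
  have hmz : lqNorm q (m - z) ≤ s * (R - r) := by
    have h : m - z = s • (c - z) := by rw [hmdef]; module
    rw [h, lqNorm_smul hq, abs_of_pos hs0]
    exact mul_le_mul_of_nonneg_left hLz hs0.le
  have hwz : ∀ w ∈ B, lqNorm q (w - z) ≤ Δ / 4 := by
    intro w hw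
    have hw' : lqNorm q (w - m) ≤ ρ := hw
    have h1 := lqNorm_sub_le hq w m z
    have h2 : s * R = Δ / 4 := by rw [hsdef]; field_simp
    have : lqNorm q (w - z) ≤ ρ + s * (R - r) := by linarith
    rw [hρdef] at this
    nlinarith
  have hBU : ∀ w ∈ B, w ∉ U := by
    intro w hw hwU
    have h1 : 3*Δ/4 ≤ lqNorm q (z - w) := hDz ▸ hDle z w hwU
    have h2 : lqNorm q (z - w) ≤ Δ / 4 := by
      rw [lqNorm_sub_rev hq]; exact hwz w hw
    linarith
  have hBE : B ⊆ E := by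
    intro w hw
    refine (hmemE w).2 ⟨hBΘ hw, ?_⟩
    have h1 := hDlip w z
    have h2 := hwz w hw
    rw [hDz] at h1
    linarith
  have hUE : U ⊆ E := by
    intro u hu
    refine (hmemE u).2 ⟨hu.2, ?_⟩
    calc D u ≤ lqNorm q (u - u) := hDle u u hu
    _ = 0 := by rw [sub_self, lqNorm_zero hq]
    _ ≤ Δ := hΔ.le
  -- measure-theoretic part
  have hBmeas : MeasurableSet B := measurableSet_lqBall hq m ρ
  have hdisj : Disjoint U B := Set.disjoint_left.2 (fun a ha hb => hBU a hb ha)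
  have hνB : ENNReal.ofReal pmin * volume B ≤ ν B := by
    rw [hνdecomp]
    have h1 : ENNReal.ofReal pmin * volume B
        ≤ (volume.withDensity fun x => ENNReal.ofReal (f x)) B := by
      rw [withDensity_apply _ hBmeas]
      calc ENNReal.ofReal pmin * volume B = ∫⁻ _ in B, ENNReal.ofReal pmin := by
            rw [setLIntegral_const, mul_comm]
      _ ≤ ∫⁻ x in B, ENNReal.ofReal (f x) := by
            apply lintegral_mono_ae
            exact (ae_restrict_iff' hBmeas).2
              (Filter.Eventually.of_forall fun w hw => ENNReal.ofReal_le_ofReal (hf w (hBΘ hw)))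
    calc ENNReal.ofReal pmin * volume B
        ≤ (volume.withDensity fun x => ENNReal.ofReal (f x)) B := h1
    _ ≤ (ν₀ + volume.withDensity fun x => ENNReal.ofReal (f x)) B := by
          rw [Measure.add_apply]; exact le_add_self
  have hνE : ν U + ENNReal.ofReal pmin * volume B ≤ ν E := by
    calc ν U + ENNReal.ofReal pmin * volume B ≤ ν U + ν B := by gcongr
    _ = ν (U ∪ B) := (measure_union hdisj hBmeas).symm
    _ ≤ ν E := measure_mono (Set.union_subset hUE hBE)
  -- TV part
  have hVmeas : MeasurableSet V := hVopen.measurableSet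
  have htvb : BddAbove (Set.range fun S : {S : Set (Fin d → ℝ) // MeasurableSet S} =>
      |(μ S.1).toReal - (ν S.1).toReal|) := by
    refine ⟨2, ?_⟩
    rintro _ ⟨S, rfl⟩
    have h1 : (μ S.1).toReal ≤ 1 := by
      have := ENNReal.toReal_mono (by norm_num) (prob_le_one (μ := μ) (s := S.1))
      simpa using this
    have h2 : (ν S.1).toReal ≤ 1 := by
      have := ENNReal.toReal_mono (by norm_num) (prob_le_one (μ := ν) (s := S.1))
      simpa using this
    have h3 : (0:ℝ) ≤ (μ S.1).toReal := ENNReal.toReal_nonneg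
    have h4 : (0:ℝ) ≤ (ν S.1).toReal := ENNReal.toReal_nonneg
    rw [abs_le]; constructor <;> linarith
  have htv : (μ V).toReal - (ν V).toReal ≤ tvDist μ ν := by
    refine le_trans (le_abs_self _) ?_
    exact le_ciSup htvb (⟨V, hVmeas⟩ : {S : Set (Fin d → ℝ) // MeasurableSet S})
  have hμUV : (μ U).toReal ≤ (μ V).toReal :=
    ENNReal.toReal_mono (measure_ne_top μ V) (measure_mono Set.inter_subset_left)
  have hνVU : (ν V).toReal ≤ (ν U).toReal := by
    have h1 : ν V ≤ ν U + ν (V ∩ Θᶜ) := by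
      have : V ⊆ U ∪ (V ∩ Θᶜ) := by
        intro a ha
        by_cases h : a ∈ Θ
        · exact Or.inl ⟨ha, h⟩
        · exact Or.inr ⟨ha, h⟩
      exact le_trans (measure_mono this) (measure_union_le _ _)
    have h2 : ν (V ∩ Θᶜ) = 0 :=
      le_antisymm (le_trans (measure_mono Set.inter_subset_right) hνsupp.le) (by simp)
    rw [h2, add_zero] at h1
    exact ENNReal.toReal_mono (measure_ne_top ν U) h1
  -- volume computations
  have hvolB1top : volume (lqBall d q 0 1) ≠ ⊤ := (volume_lqBall_one_lt_top hq).ne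
  have hvolB : (volume B).toReal = ρ ^ d * (volume (lqBall d q 0 1)).toReal := by
    rw [hBdef, volume_lqBall hq m hρ0, ENNReal.toReal_mul, ENNReal.toReal_ofReal (by positivity)]
  have hvolBtop : volume B ≠ ⊤ := by
    rw [hBdef, volume_lqBall hq m hρ0]
    exact ENNReal.mul_ne_top ENNReal.ofReal_ne_top hvolB1top
  have hkey : pmin * (volume B).toReal
      = pmin * (volume (lqBall d q 0 1)).toReal * (r / (4 * R)) ^ d * Δ ^ d := by
    rw [hvolB]
    have : ρ ^ d = (r / (4 * R)) ^ d * Δ ^ d := by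
      rw [← mul_pow]
      congr 1
      rw [hρdef, hsdef]
      field_simp
    rw [this]
    ring
  -- conclude
  have hET : ν E ≠ ⊤ := measure_ne_top ν E
  rw [← ENNReal.toReal_le_toReal (measure_ne_top μ U) hET]
  have hsum : (ν U).toReal + pmin * (volume B).toReal ≤ (ν E).toReal := by
    have h1 := ENNReal.toReal_mono hET hνE
    rwa [ENNReal.toReal_add (measure_ne_top ν U)
        (ENNReal.mul_ne_top ENNReal.ofReal_ne_top hvolBtop),
      ENNReal.toReal_mul, ENNReal.toReal_ofReal hpmin.le] at h1
  rw [hkey] at hsum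
  linarith


end
end

section
/- Let d ≥ 1, ε' > 0, δ ∈ (0,1), ω ∈ (0,1), and let Θ ⊆ ℝ^d be a closed ℓ∞-ball of diameter R > 0 (i.e., an axis-aligned cube of side length R). Set Δ = 2·d·R·(δ/(2ω))^{1/d}. Let x_apx be a random point of Θ with law μ (any probability measure on Θ); let x equal x_apx with probability 1−ω and otherwise equal an independent uniform sample from Θ; and let x_pure = x + Z where Z ∼ Laplace^⊗d(2Δ/ε') is independent. Then E‖x_pure − x_apx‖_∞ ≤ ω·R + (4·R·d·(log d + 1)/ε')·(δ/(2ω))^{1/d}, where ‖v‖_∞ = max_i |v_i|. -/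
open MeasureTheory
open scoped ENNReal

noncomputable section

/-- The d-fold product of the Laplace(b) distribution on ℝ^d, given by its density. -/
def laplacePi (d : ℕ) (b : ℝ) : Measure (Fin d → ℝ) :=
  volume.withDensity fun x => ENNReal.ofReal (∏ i, (1 / (2 * b)) * Real.exp (-|x i| / b))

/-- The uniform distribution (normalized Lebesgue measure) on a set Θ ⊆ ℝ^d. -/
def unifOn {d : ℕ} (Θ : Set (Fin d → ℝ)) : Measure (Fin d → ℝ) :=
  (volume Θ)⁻¹ • volume.restrict Θ

/-- The Bernoulli distribution on `Bool` putting mass `p` on `true` and `1-p` on `false`. -/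
def bern (p : ℝ) : Measure Bool :=
  ENNReal.ofReal p • Measure.dirac true + ENNReal.ofReal (1 - p) • Measure.dirac false


open Real Set Filter Topology
open scoped NNReal


lemma tendsto_linexp (p q b : ℝ) (hb : 0 < b) :
    Tendsto (fun x => (p * x + q) * Real.exp (-x / b)) atTop (𝓝 0) := by
  have h1 : Tendsto (fun y : ℝ => (p * b * y + q) * Real.exp (-y)) atTop (𝓝 0) := by
    have ha : Tendsto (fun y : ℝ => (p * b) * (y ^ 1 * Real.exp (-y)) + q * Real.exp (-y))
        atTop (𝓝 ((p * b) * 0 + q * 0)) :=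
      ((Real.tendsto_pow_mul_exp_neg_atTop_nhds_zero 1).const_mul _).add
        (((Real.tendsto_pow_mul_exp_neg_atTop_nhds_zero 0).const_mul q).congr (by simp))
    simpa [add_mul, mul_assoc] using ha
  have h2 : Tendsto (fun x : ℝ => x / b) atTop atTop := tendsto_id.atTop_div_const hb
  have := h1.comp h2
  refine this.congr fun x => ?_
  simp only [Function.comp]
  rw [neg_div]
  congr 2
  field_simp

lemma integral_exp_Ioi (b a : ℝ) (hb : 0 < b) :
    IntegrableOn (fun x => Real.exp (-x / b)) (Ioi a) ∧
      ∫ x in Ioi a, Real.exp (-x / b) = b * Real.exp (-a / b) := by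
  have hd : ∀ x ∈ Ici a, HasDerivAt (fun x => -b * Real.exp (-x / b)) (Real.exp (-x / b)) x := by
    intro x _
    have h1 : HasDerivAt (fun x : ℝ => -x / b) (-1 / b) x := ((hasDerivAt_id x).neg).div_const b
    have h2 := (h1.exp).const_mul (-b)
    refine h2.congr_deriv ?_
    field_simp
  have hpos : ∀ x ∈ Ioi a, 0 ≤ Real.exp (-x / b) := fun x _ => (Real.exp_pos _).le
  have hten : Tendsto (fun x => -b * Real.exp (-x / b)) atTop (𝓝 0) := by
    have := tendsto_linexp 0 (-b) b hb
    refine this.congr fun x => by ring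
  exact ⟨integrableOn_Ioi_deriv_of_nonneg' hd hpos hten,
    by rw [integral_Ioi_of_hasDerivAt_of_nonneg' hd hpos hten]; ring⟩

lemma integral_linexp_Ioi (b T : ℝ) (hb : 0 < b) :
    IntegrableOn (fun x => (x - T) * Real.exp (-x / b)) (Ioi T) ∧
      ∫ x in Ioi T, (x - T) * Real.exp (-x / b) = b ^ 2 * Real.exp (-T / b) := by
  set g : ℝ → ℝ := fun x => -(x - T + b) * (b * Real.exp (-x / b)) with hg
  have hd : ∀ x ∈ Ici T, HasDerivAt g ((x - T) * Real.exp (-x / b)) x := by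
    intro x _
    have h1 : HasDerivAt (fun x : ℝ => -(x - T + b)) (-1) x :=
      (((hasDerivAt_id x).sub_const T).add_const b).neg
    have hi : HasDerivAt (fun x : ℝ => -x / b) (-1 / b) x := ((hasDerivAt_id x).neg).div_const b
    have h2 : HasDerivAt (fun x : ℝ => b * Real.exp (-x / b))
        (b * (Real.exp (-x / b) * (-1 / b))) x := (hi.exp).const_mul b
    have := h1.mul h2
    refine this.congr_deriv ?_
    field_simp
    ring
  have hpos : ∀ x ∈ Ioi T, 0 ≤ (x - T) * Real.exp (-x / b) := fun x hx =>
    mul_nonneg (by simp at hx; linarith) (Real.exp_pos _).le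
  have hten : Tendsto g atTop (𝓝 0) := by
    have := tendsto_linexp (-b) ((T - b) * b) b hb
    refine this.congr fun x => by rw [hg]; ring
  refine ⟨integrableOn_Ioi_deriv_of_nonneg' hd hpos hten, ?_⟩
  rw [integral_Ioi_of_hasDerivAt_of_nonneg' hd hpos hten, hg]
  simp only [sub_self, zero_sub]
  ring


lemma integrable_comp_abs' {f : ℝ → ℝ} (hf0 : IntegrableOn f (Ioi 0)) :
    Integrable (fun x => f |x|) := by
  have hf : IntegrableOn (fun x => f |x|) (Ioi 0) :=
    hf0.congr_fun (fun x hx => by rw [abs_of_pos hx]) measurableSet_Ioi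
  have int_Iic : IntegrableOn (fun x ↦ f |x|) (Iic 0) := by
    rw [← Measure.map_neg_eq_self (volume : Measure ℝ)]
    have m : MeasurableEmbedding fun x : ℝ => -x := (Homeomorph.neg ℝ).measurableEmbedding
    rw [m.integrableOn_map_iff]
    simp_rw [Function.comp_def, abs_neg, neg_preimage, neg_Iic, neg_zero]
    exact (integrableOn_Ici_iff_integrableOn_Ioi).mpr hf
  have h := int_Iic.union hf
  rwa [Iic_union_Ioi, integrableOn_univ] at h

-- the Laplace density
noncomputable def ldens (b t : ℝ) : ℝ := (1 / (2 * b)) * Real.exp (-|t| / b)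

lemma ldens_nonneg (b t : ℝ) (hb : 0 < b) : 0 ≤ ldens b t :=
  mul_nonneg (by positivity) (Real.exp_pos _).le

lemma ldens_eq_comp_abs (b : ℝ) :
    ldens b = fun t => (fun s => (1 / (2 * b)) * Real.exp (-s / b)) |t| := rfl

lemma integrable_ldens (b : ℝ) (hb : 0 < b) : Integrable (ldens b) := by
  have := integrable_comp_abs' (f := fun s => (1 / (2 * b)) * Real.exp (-s / b))
    ((integral_exp_Ioi b 0 hb).1.const_mul _)
  exact this

lemma integral_ldens (b : ℝ) (hb : 0 < b) : ∫ t, ldens b t = 1 := by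
  rw [ldens_eq_comp_abs, integral_comp_abs (f := fun s => (1 / (2 * b)) * Real.exp (-s / b)), integral_const_mul, (integral_exp_Ioi b 0 hb).2]
  rw [neg_zero, zero_div, Real.exp_zero]
  field_simp

lemma measurable_ldens (b : ℝ) : Measurable (ldens b) := by
  unfold ldens
  fun_prop

-- excess function
noncomputable def mex (T t : ℝ) : ℝ := max (|t| - T) 0

lemma mex_nonneg (T t : ℝ) : 0 ≤ mex T t := le_max_right _ _

lemma measurable_mex (T : ℝ) : Measurable (mex T) := by
  unfold mex
  fun_prop

lemma ldens_mul_mex_eq (b T : ℝ) : (fun t => ldens b t * mex T t)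
    = fun t => (fun s => (1 / (2 * b)) * ((Ioi T).indicator (fun u => (u - T) * Real.exp (-u / b)) s)) |t| := by
  funext t
  simp only [ldens, mex, indicator]
  by_cases h : |t| ∈ Ioi T
  · rw [if_pos h]
    simp only [mem_Ioi] at h
    rw [max_eq_left (by linarith)]
    ring
  · rw [if_neg h]
    simp only [mem_Ioi, not_lt] at h
    rw [max_eq_right (by linarith)]
    ring

lemma integrableOn_inner (b T : ℝ) (hb : 0 < b) (hT : 0 ≤ T) :
    IntegrableOn (fun s => (1 / (2 * b)) * ((Ioi T).indicator (fun u => (u - T) * Real.exp (-u / b)) s)) (Ioi 0) := by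
  apply Integrable.integrableOn
  apply Integrable.const_mul
  rw [integrable_indicator_iff measurableSet_Ioi]
  exact (integral_linexp_Ioi b T hb).1

lemma integrable_ldens_mul_mex (b T : ℝ) (hb : 0 < b) (hT : 0 ≤ T) :
    Integrable (fun t => ldens b t * mex T t) := by
  rw [ldens_mul_mex_eq]
  exact integrable_comp_abs'
    (f := fun s => (1 / (2 * b)) * ((Ioi T).indicator (fun u => (u - T) * Real.exp (-u / b)) s))
    (integrableOn_inner b T hb hT)

lemma integral_ldens_mul_mex (b T : ℝ) (hb : 0 < b) (hT : 0 ≤ T) :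
    ∫ t, ldens b t * mex T t = b * Real.exp (-T / b) := by
  rw [ldens_mul_mex_eq, integral_comp_abs
    (f := fun s => (1 / (2 * b)) * ((Ioi T).indicator (fun u => (u - T) * Real.exp (-u / b)) s)),
    integral_const_mul,
    integral_indicator measurableSet_Ioi, Measure.restrict_restrict measurableSet_Ioi,
    inter_eq_left.mpr (Ioi_subset_Ioi hT)]
  rw [(integral_linexp_Ioi b T hb).2]
  field_simp

-- Bernoulli lemmas
lemma integrable_dirac' (f : Bool → ℝ) (a : Bool) : Integrable f (Measure.dirac a) := by
  have h : (fun _ : Bool => f a) =ᵐ[Measure.dirac a] f :=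
    (MeasureTheory.ae_dirac_iff (MeasurableSet.of_discrete (s := {x | f a = f x}))).2 rfl
  exact (integrable_const (f a)).congr h

lemma integrable_bern (p : ℝ) (f : Bool → ℝ) : Integrable f (bern p) := by
  unfold bern
  exact Integrable.add_measure
    ((integrable_dirac' f true).smul_measure ENNReal.ofReal_ne_top)
    ((integrable_dirac' f false).smul_measure ENNReal.ofReal_ne_top)

lemma bern_prob (p : ℝ) (hp0 : 0 ≤ p) (hp1 : p ≤ 1) : IsProbabilityMeasure (bern p) := by
  constructor
  unfold bern
  simp only [Measure.coe_add, Pi.add_apply, Measure.coe_smul, Pi.smul_apply,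
    Measure.dirac_apply_of_mem (Set.mem_univ _), smul_eq_mul, mul_one]
  rw [← ENNReal.ofReal_add hp0 (by linarith)]
  norm_num

lemma integral_bern (p : ℝ) (hp0 : 0 ≤ p) (hp1 : p ≤ 1) (f : Bool → ℝ) :
    ∫ y, f y ∂(bern p) = p * f true + (1 - p) * f false := by
  unfold bern
  rw [integral_add_measure
      ((integrable_dirac' f true).smul_measure ENNReal.ofReal_ne_top)
      ((integrable_dirac' f false).smul_measure ENNReal.ofReal_ne_top),
    integral_smul_measure, integral_smul_measure, integral_dirac, integral_dirac,
    ENNReal.toReal_ofReal hp0, ENNReal.toReal_ofReal (by linarith)]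
  simp [smul_eq_mul]


-- density rewritten via NNReal
lemma laplacePi_eq (d : ℕ) (b : ℝ) :
    laplacePi d b
      = volume.withDensity fun x => (((∏ i, ldens b (x i)).toNNReal : ℝ≥0) : ℝ≥0∞) := rfl

lemma measurable_D (d : ℕ) (b : ℝ) :
    Measurable fun x : Fin d → ℝ => (∏ i, ldens b (x i)).toNNReal := by
  apply Measurable.real_toNNReal
  exact Finset.measurable_prod _ (fun i _ => (measurable_ldens b).comp (measurable_pi_apply i))

lemma smul_eq_mul_prod (d : ℕ) (b : ℝ) (hb : 0 < b) (g : (Fin d → ℝ) → ℝ) :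
    (fun x => (∏ i, ldens b (x i)).toNNReal • g x)
      = fun x => (∏ i, ldens b (x i)) * g x := by
  funext x
  rw [NNReal.smul_def, Real.coe_toNNReal _ (Finset.prod_nonneg fun i _ => ldens_nonneg b (x i) hb),
    smul_eq_mul]

lemma integrable_prod_ldens (d : ℕ) (b : ℝ) (hb : 0 < b) :
    Integrable (fun x : Fin d → ℝ => ∏ j, ldens b (x j)) :=
  Integrable.fintype_prod (f := fun _ => ldens b) (fun _ => integrable_ldens b hb)

lemma integral_prod_ldens (d : ℕ) (b : ℝ) (hb : 0 < b) :
    ∫ x : Fin d → ℝ, ∏ j, ldens b (x j) = 1 := by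
  rw [integral_fintype_prod_volume_eq_prod (f := fun _ : Fin d => ldens b)]
  simp [integral_ldens b hb]

lemma laplacePi_prob (d : ℕ) (b : ℝ) (hb : 0 < b) :
    IsProbabilityMeasure (laplacePi d b) := by
  constructor
  rw [laplacePi_eq, withDensity_apply _ MeasurableSet.univ, Measure.restrict_univ,
    lintegral_coe_eq_integral _ ?_]
  · rw [show (fun x : Fin d → ℝ => ((∏ i, ldens b (x i)).toNNReal : ℝ))
        = fun x => ∏ i, ldens b (x i) from funext fun x =>
          Real.coe_toNNReal _ (Finset.prod_nonneg fun i _ => ldens_nonneg b (x i) hb),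
      integral_prod_ldens d b hb]
    simp
  · rw [show (fun x : Fin d → ℝ => ((∏ i, ldens b (x i)).toNNReal : ℝ))
        = fun x => ∏ i, ldens b (x i) from funext fun x =>
          Real.coe_toNNReal _ (Finset.prod_nonneg fun i _ => ldens_nonneg b (x i) hb)]
    exact integrable_prod_ldens d b hb

-- the H function
noncomputable def Hf (d : ℕ) (b T : ℝ) (i j : Fin d) : ℝ → ℝ :=
  fun t => if j = i then ldens b t * mex T t else ldens b t

lemma prod_Hf (d : ℕ) (b T : ℝ) (i : Fin d) (x : Fin d → ℝ) :
    ∏ j, Hf d b T i j (x j) = (∏ j, ldens b (x j)) * mex T (x i) := by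
  have h : ∀ j : Fin d, Hf d b T i j (x j) = ldens b (x j) * (if j = i then mex T (x j) else 1) := by
    intro j
    simp only [Hf]
    split <;> simp
  rw [Finset.prod_congr rfl (fun j _ => h j), Finset.prod_mul_distrib,
    Finset.prod_ite_eq' Finset.univ i (fun j => mex T (x j))]
  simp

lemma integrable_Hf (d : ℕ) (b T : ℝ) (hb : 0 < b) (hT : 0 ≤ T) (i : Fin d) :
    Integrable (fun x : Fin d → ℝ => ∏ j, Hf d b T i j (x j)) := by
  apply Integrable.fintype_prod (f := Hf d b T i)
  intro j
  by_cases h : j = i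
  · unfold Hf
    simp only [if_pos h]
    exact integrable_ldens_mul_mex b T hb hT
  · unfold Hf
    simp only [if_neg h]
    exact integrable_ldens b hb

lemma integral_Hf (d : ℕ) (b T : ℝ) (hb : 0 < b) (hT : 0 ≤ T) (i : Fin d) :
    ∫ x : Fin d → ℝ, ∏ j, Hf d b T i j (x j) = b * Real.exp (-T / b) := by
  rw [integral_fintype_prod_volume_eq_prod (f := Hf d b T i)]
  have h : ∀ j : Fin d, ∫ t, Hf d b T i j t = if j = i then b * Real.exp (-T / b) else 1 := by
    intro j
    by_cases h : j = i
    · rw [if_pos h]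
      simpa only [Hf, if_pos h] using integral_ldens_mul_mex b T hb hT
    · rw [if_neg h]
      simpa only [Hf, if_neg h] using integral_ldens b hb
  rw [Finset.prod_congr rfl (fun j _ => h j),
    Finset.prod_ite_eq' Finset.univ i (fun _ => b * Real.exp (-T / b))]
  simp

lemma key_fun_eq (d : ℕ) (b T : ℝ) :
    (fun x : Fin d → ℝ => (∏ i, ldens b (x i)) * (T + ∑ i, mex T (x i)))
      = fun x => T * (∏ j, ldens b (x j)) + ∑ i, ∏ j, Hf d b T i j (x j) := by
  funext x
  rw [mul_add, Finset.mul_sum]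
  congr 1
  · ring
  · exact Finset.sum_congr rfl fun i _ => (prod_Hf d b T i x).symm

lemma laplacePi_bound_integrable (d : ℕ) (b T : ℝ) (hb : 0 < b) (hT : 0 ≤ T) :
    Integrable (fun z => T + ∑ i, mex T (z i)) (laplacePi d b) := by
  rw [laplacePi_eq]
  rw [integrable_withDensity_iff_integrable_smul (measurable_D d b)]
  rw [smul_eq_mul_prod d b hb, key_fun_eq d b T]
  exact ((integrable_prod_ldens d b hb).const_mul T).add
    (integrable_finset_sum _ fun i _ => integrable_Hf d b T hb hT i)

lemma laplacePi_bound_integral (d : ℕ) (b T : ℝ) (hb : 0 < b) (hT : 0 ≤ T) :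
    ∫ z, (T + ∑ i, mex T (z i)) ∂(laplacePi d b)
      = T + d * (b * Real.exp (-T / b)) := by
  rw [laplacePi_eq, integral_withDensity_eq_integral_smul (measurable_D d b),
    smul_eq_mul_prod d b hb, key_fun_eq d b T,
    integral_add ((integrable_prod_ldens d b hb).const_mul T)
      (integrable_finset_sum _ fun i _ => integrable_Hf d b T hb hT i),
    integral_const_mul, integral_prod_ldens d b hb,
    integral_finset_sum _ fun i _ => integrable_Hf d b T hb hT i]
  rw [Finset.sum_congr rfl fun i _ => integral_Hf d b T hb hT i]
  simp [Finset.sum_const, mul_one]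


lemma abs_le_mex (T t : ℝ) (hT : 0 ≤ T) : |t| ≤ T + mex T t := by
  unfold mex
  rcases le_total (|t|) T with h | h
  · simpa using le_add_of_le_of_nonneg h (le_max_right _ _)
  · rw [max_eq_left (by linarith)]
    linarith

lemma theta_eq (d : ℕ) (c : Fin d → ℝ) (R : ℝ) :
    {x : Fin d → ℝ | ∀ i, |x i - c i| ≤ R / 2}
      = Set.pi univ fun i => Icc (c i - R / 2) (c i + R / 2) := by
  ext x
  simp only [mem_setOf_eq, mem_univ_pi, mem_Icc, abs_le]
  refine forall_congr' fun i => ?_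
  constructor <;> intro h <;> exact ⟨by linarith [h.1, h.2], by linarith [h.1, h.2]⟩

lemma volume_theta (d : ℕ) (c : Fin d → ℝ) (R : ℝ) :
    volume {x : Fin d → ℝ | ∀ i, |x i - c i| ≤ R / 2} = ENNReal.ofReal R ^ d := by
  rw [theta_eq, volume_pi_pi]
  have : ∀ i : Fin d, volume (Icc (c i - R / 2) (c i + R / 2)) = ENNReal.ofReal R := by
    intro i
    rw [Real.volume_Icc]
    congr 1
    ring
  rw [Finset.prod_congr rfl fun i _ => this i, Finset.prod_const, Finset.card_univ,
    Fintype.card_fin]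

lemma measurable_theta (d : ℕ) (c : Fin d → ℝ) (R : ℝ) :
    MeasurableSet {x : Fin d → ℝ | ∀ i, |x i - c i| ≤ R / 2} := by
  rw [theta_eq]
  exact MeasurableSet.univ_pi fun i => measurableSet_Icc

lemma unifOn_prob (d : ℕ) (c : Fin d → ℝ) (R : ℝ) (hR : 0 < R) (Θ : Set (Fin d → ℝ))
    (hΘ : Θ = {x : Fin d → ℝ | ∀ i, |x i - c i| ≤ R / 2}) :
    IsProbabilityMeasure (unifOn Θ) := by
  constructor
  unfold unifOn
  rw [Measure.coe_smul, Pi.smul_apply, Measure.restrict_apply_univ, smul_eq_mul]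
  rw [hΘ, volume_theta]
  exact ENNReal.inv_mul_cancel (pow_ne_zero _ (ENNReal.ofReal_pos.2 hR).ne')
    (ENNReal.pow_ne_top ENNReal.ofReal_ne_top)

lemma unifOn_compl (d : ℕ) (Θ : Set (Fin d → ℝ)) (hm : MeasurableSet Θ) :
    unifOn Θ Θᶜ = 0 := by
  unfold unifOn
  rw [Measure.coe_smul, Pi.smul_apply, Measure.restrict_apply hm.compl, compl_inter_self,
    measure_empty, smul_eq_mul, mul_zero]


/-- **Purification utility in the ℓ∞ norm (Appendix D of the paper).**
With `Θ` an ℓ∞-ball (axis-aligned cube) of diameter `R` and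
`Δ = 2dR(δ/(2ω))^{1/d}`, on the canonical product space carrying an independent
quadruple `(x_apx, coin, u, Z)` with `x_apx ∼ μ`, `coin` Bernoulli(1-ω), `u ∼ Unif(Θ)`
and `Z ∼ Laplace^⊗d(2Δ/ε')`, letting `x = x_apx` on heads and `x = u` otherwise, and
`x_pure = x + Z`, one has
`E‖x_pure - x_apx‖_∞ ≤ ωR + (4Rd(log d + 1)/ε')(δ/(2ω))^{1/d}`. -/
theorem purification_utility_linf
    (d : ℕ) (hd : 1 ≤ d)
    (ε' δ ω R : ℝ) (hε' : 0 < ε')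
    (hδ : δ ∈ Set.Ioo (0 : ℝ) 1) (hω : ω ∈ Set.Ioo (0 : ℝ) 1) (hR : 0 < R)
    (c : Fin d → ℝ) (Θ : Set (Fin d → ℝ))
    (hΘ : Θ = {x : Fin d → ℝ | ∀ i, |x i - c i| ≤ R / 2})
    (μ : Measure (Fin d → ℝ)) (hμ : IsProbabilityMeasure μ) (hμsupp : μ Θᶜ = 0)
    (Δ : ℝ) (hΔ : Δ = 2 * (d : ℝ) * R * (δ / (2 * ω)) ^ (1 / (d : ℝ))) :
    ∫ p : (Fin d → ℝ) × (Bool × ((Fin d → ℝ) × (Fin d → ℝ))),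
        (⨆ i, |((if p.2.1 then p.1 else p.2.2.1) + p.2.2.2 - p.1) i|)
      ∂(μ.prod ((bern (1 - ω)).prod ((unifOn Θ).prod (laplacePi d (2 * Δ / ε')))))
      ≤ ω * R + (4 * R * (d : ℝ) * (Real.log d + 1) / ε') * (δ / (2 * ω)) ^ (1 / (d : ℝ)) := by
  -- basic positivity facts
  have hd0 : (0 : ℝ) < d := by exact_mod_cast hd
  have hd1 : (1 : ℝ) ≤ d := by exact_mod_cast hd
  have hs : 0 < (δ / (2 * ω)) ^ (1 / (d : ℝ)) :=
    Real.rpow_pos_of_pos (div_pos hδ.1 (by linarith [hω.1])) _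
  have hΔpos : 0 < Δ := by rw [hΔ]; exact mul_pos (mul_pos (mul_pos two_pos hd0) hR) hs
  set b : ℝ := 2 * Δ / ε' with hb_def
  have hb : 0 < b := div_pos (by linarith) hε'
  set T : ℝ := b * Real.log d with hT_def
  have hT : 0 ≤ T := mul_nonneg hb.le (Real.log_nonneg hd1)
  have hlog : 0 ≤ Real.log d := Real.log_nonneg hd1
  have hrhs2 : (4 * R * (d : ℝ) * (Real.log d + 1) / ε') * (δ / (2 * ω)) ^ (1 / (d : ℝ))
      = T + d * (b * Real.exp (-T / b)) := by
    have he : Real.exp (-T / b) = (d : ℝ)⁻¹ := by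
      have : -T / b = -Real.log d := by
        rw [hT_def]; field_simp
      rw [this, Real.exp_neg, Real.exp_log hd0]
    rw [he, hT_def, hb_def, hΔ]
    field_simp
    ring
  have hrhs_nonneg : 0 ≤ ω * R + (4 * R * (d : ℝ) * (Real.log d + 1) / ε')
      * (δ / (2 * ω)) ^ (1 / (d : ℝ)) := by
    have h1 : 0 ≤ ω * R := (mul_pos hω.1 hR).le
    have h2 : 0 ≤ (4 * R * (d : ℝ) * (Real.log d + 1) / ε') := by positivity
    nlinarith [hs.le]
  -- probability measure instances
  haveI hP1 : IsProbabilityMeasure (bern (1 - ω)) :=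
    bern_prob _ (by linarith [hω.2]) (by linarith [hω.1])
  haveI hP2 : IsProbabilityMeasure (unifOn Θ) := unifOn_prob d c R hR Θ hΘ
  haveI hP3 : IsProbabilityMeasure (laplacePi d b) := laplacePi_prob d b hb
  set ν := (bern (1 - ω)).prod ((unifOn Θ).prod (laplacePi d b)) with hν
  set P := μ.prod ν with hP
  haveI : IsProbabilityMeasure P := by infer_instance
  -- the bounding functions
  set g1 : Bool → ℝ := fun coin => if coin then 0 else R with hg1
  set g2 : (Fin d → ℝ) → ℝ := fun z => T + ∑ i, mex T (z i) with hg2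
  have hg1m : Measurable g1 := Measurable.of_discrete
  have hg2m : Measurable g2 :=
    measurable_const.add (Finset.measurable_sum _ fun i _ =>
      (measurable_mex T).comp (measurable_pi_apply i))
  -- maps
  have hm1 : Measure.map (fun p : (Fin d → ℝ) × (Bool × ((Fin d → ℝ) × (Fin d → ℝ))) => p.2.1) P
      = bern (1 - ω) := by
    rw [show (fun p : (Fin d → ℝ) × (Bool × ((Fin d → ℝ) × (Fin d → ℝ))) => p.2.1)
        = Prod.fst ∘ Prod.snd from rfl,
      ← Measure.map_map measurable_fst measurable_snd, hP, Measure.map_snd_prod, measure_univ,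
      one_smul, hν, Measure.map_fst_prod, measure_univ, one_smul]
  have hm2 : Measure.map (fun p : (Fin d → ℝ) × (Bool × ((Fin d → ℝ) × (Fin d → ℝ))) => p.2.2.2) P
      = laplacePi d b := by
    rw [show (fun p : (Fin d → ℝ) × (Bool × ((Fin d → ℝ) × (Fin d → ℝ))) => p.2.2.2)
        = Prod.snd ∘ (Prod.snd ∘ Prod.snd) from rfl,
      ← Measure.map_map measurable_snd (measurable_snd.comp measurable_snd),
      ← Measure.map_map measurable_snd measurable_snd, hP, Measure.map_snd_prod, measure_univ,
      one_smul, hν, Measure.map_snd_prod, measure_univ, one_smul, Measure.map_snd_prod,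
      measure_univ, one_smul]
  -- integrability of the bound
  have hInt1 : Integrable (fun p : (Fin d → ℝ) × (Bool × ((Fin d → ℝ) × (Fin d → ℝ))) =>
      g1 p.2.1) P := by
    have hib : Integrable g1 (Measure.map
        (fun p : (Fin d → ℝ) × (Bool × ((Fin d → ℝ) × (Fin d → ℝ))) => p.2.1) P) := by
      rw [hm1]; exact integrable_bern (1 - ω) g1
    exact (integrable_map_measure hg1m.aestronglyMeasurable
      (measurable_fst.comp measurable_snd).aemeasurable).1 hib
  have hInt2 : Integrable (fun p : (Fin d → ℝ) × (Bool × ((Fin d → ℝ) × (Fin d → ℝ))) =>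
      g2 p.2.2.2) P := by
    have hib : Integrable g2 (Measure.map
        (fun p : (Fin d → ℝ) × (Bool × ((Fin d → ℝ) × (Fin d → ℝ))) => p.2.2.2) P) := by
      rw [hm2]; exact laplacePi_bound_integrable d b T hb hT
    exact (integrable_map_measure hg2m.aestronglyMeasurable
      (measurable_snd.comp (measurable_snd.comp measurable_snd)).aemeasurable).1 hib
  have hIntG : Integrable (fun p : (Fin d → ℝ) × (Bool × ((Fin d → ℝ) × (Fin d → ℝ))) =>
      g1 p.2.1 + g2 p.2.2.2) P := hInt1.add hInt2
  -- a.e. membership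
  have hΘm : MeasurableSet Θ := hΘ ▸ measurable_theta d c R
  have h1 : ∀ᵐ p : (Fin d → ℝ) × (Bool × ((Fin d → ℝ) × (Fin d → ℝ))) ∂P, p.1 ∈ Θ := by
    rw [ae_iff]
    have hset : {p : (Fin d → ℝ) × (Bool × ((Fin d → ℝ) × (Fin d → ℝ))) | ¬ p.1 ∈ Θ}
        = Θᶜ ×ˢ univ := by ext p; simp
    rw [hset, hP, Measure.prod_prod, hμsupp, zero_mul]
  have h2 : ∀ᵐ p : (Fin d → ℝ) × (Bool × ((Fin d → ℝ) × (Fin d → ℝ))) ∂P, p.2.2.1 ∈ Θ := by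
    rw [ae_iff]
    have hset : {p : (Fin d → ℝ) × (Bool × ((Fin d → ℝ) × (Fin d → ℝ))) | ¬ p.2.2.1 ∈ Θ}
        = univ ×ˢ (univ ×ˢ (Θᶜ ×ˢ univ)) := by ext p; simp
    rw [hset, hP, Measure.prod_prod, hν, Measure.prod_prod, Measure.prod_prod,
      unifOn_compl d Θ hΘm, zero_mul, mul_zero, mul_zero]
  -- pointwise bound
  haveI : Nonempty (Fin d) := ⟨⟨0, hd⟩⟩
  have hae : ∀ᵐ p : (Fin d → ℝ) × (Bool × ((Fin d → ℝ) × (Fin d → ℝ))) ∂P,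
      (⨆ i, |((if p.2.1 then p.1 else p.2.2.1) + p.2.2.2 - p.1) i|) ≤ g1 p.2.1 + g2 p.2.2.2 := by
    filter_upwards [h1, h2] with p hp1 hp2
    apply ciSup_le
    intro i
    have hsplit : ((if p.2.1 then p.1 else p.2.2.1) + p.2.2.2 - p.1) i
        = ((if p.2.1 then p.1 else p.2.2.1) i - p.1 i) + p.2.2.2 i := by
      simp only [Pi.add_apply, Pi.sub_apply]
      ring
    rw [hsplit]
    have habs := abs_add_le ((if p.2.1 then p.1 else p.2.2.1) i - p.1 i) (p.2.2.2 i)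
    have hb1 : |(if p.2.1 then p.1 else p.2.2.1) i - p.1 i| ≤ g1 p.2.1 := by
      by_cases hcoin : p.2.1 = true
      · simp [hcoin, hg1]
      · rw [Bool.not_eq_true] at hcoin
        simp only [hcoin, Bool.false_eq_true, if_false, hg1]
        rw [hΘ] at hp1 hp2
        have ha := hp1 i
        have hu := hp2 i
        calc |p.2.2.1 i - p.1 i| ≤ |p.2.2.1 i - c i| + |c i - p.1 i| := abs_sub_le _ _ _
          _ ≤ R / 2 + R / 2 := add_le_add hu (by rw [abs_sub_comm]; exact ha)
          _ = R := by ring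
    have hb2 : |p.2.2.2 i| ≤ g2 p.2.2.2 := by
      rw [hg2]
      calc |p.2.2.2 i| ≤ T + mex T (p.2.2.2 i) := abs_le_mex T _ hT
        _ ≤ T + ∑ j, mex T (p.2.2.2 j) := by
            exact add_le_add_right (Finset.single_le_sum (fun j _ => mex_nonneg T _)
              (Finset.mem_univ i)) T
    calc |(if p.2.1 then p.1 else p.2.2.1) i - p.1 i + p.2.2.2 i|
        ≤ |(if p.2.1 then p.1 else p.2.2.1) i - p.1 i| + |p.2.2.2 i| := habs
      _ ≤ g1 p.2.1 + g2 p.2.2.2 := add_le_add hb1 hb2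
  -- integral of the bound
  have hGint : ∫ p : (Fin d → ℝ) × (Bool × ((Fin d → ℝ) × (Fin d → ℝ))),
      (g1 p.2.1 + g2 p.2.2.2) ∂P
      = ω * R + (T + d * (b * Real.exp (-T / b))) := by
    rw [integral_add hInt1 hInt2]
    congr 1
    · have h := integral_map (μ := P)
        (φ := fun p : (Fin d → ℝ) × (Bool × ((Fin d → ℝ) × (Fin d → ℝ))) => p.2.1)
        (measurable_fst.comp measurable_snd).aemeasurable hg1m.aestronglyMeasurable
      rw [hm1] at h
      rw [← h, integral_bern (1 - ω) (by linarith [hω.2]) (by linarith [hω.1]) g1]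
      simp only [hg1]
      norm_num
    · have h := integral_map (μ := P)
        (φ := fun p : (Fin d → ℝ) × (Bool × ((Fin d → ℝ) × (Fin d → ℝ))) => p.2.2.2)
        (measurable_snd.comp (measurable_snd.comp measurable_snd)).aemeasurable
        hg2m.aestronglyMeasurable
      rw [hm2] at h
      rw [← h, laplacePi_bound_integral d b T hb hT]
  -- conclude
  by_cases hF : Integrable (fun p : (Fin d → ℝ) × (Bool × ((Fin d → ℝ) × (Fin d → ℝ))) =>
      ⨆ i, |((if p.2.1 then p.1 else p.2.2.1) + p.2.2.2 - p.1) i|) P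
  · calc ∫ p, (⨆ i, |((if p.2.1 then p.1 else p.2.2.1) + p.2.2.2 - p.1) i|) ∂P
        ≤ ∫ p, (g1 p.2.1 + g2 p.2.2.2) ∂P := integral_mono_ae hF hIntG hae
      _ = ω * R + (T + d * (b * Real.exp (-T / b))) := hGint
      _ = ω * R + (4 * R * (d : ℝ) * (Real.log d + 1) / ε')
            * (δ / (2 * ω)) ^ (1 / (d : ℝ)) := by rw [hrhs2]
  · rw [integral_undef hF]
    exact hrhs_nonneg


end
end
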